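/- Let V be a real vector space of dimension 2n with n ≥ 1, and let Ω be a nondegenerate alternating 2-form on V. Then the top-degree form Ω^n (the n-fold wedge power of Ω) is nonzero. -/

import Mathlib

set_option maxHeartbeats 1000000

open scoped TensorProduct

/-- Wedge product of real-valued alternating forms (shuffle/determinant convention). -/
noncomputable def wedge {V : Type*} [AddCommGroup V] [Module ℝ V] {k l : ℕ}
    (α : V [⋀^Fin k]→ₗ[ℝ] ℝ) (β : V [⋀^Fin l]→ₗ[ℝ] ℝ) :
    V [⋀^Fin (k + l)]→ₗ[ℝ] ℝ :=
  AlternatingMap.domDomCongr finSumFinEquiv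
    ((TensorProduct.lid ℝ ℝ).toLinearMap.compAlternatingMap (α.domCoprod β))

/-- A linear functional regarded as an alternating `1`-form. -/
noncomputable def oneForm {V : Type*} [AddCommGroup V] [Module ℝ V]
    (α : V →ₗ[ℝ] ℝ) : V [⋀^Fin 1]→ₗ[ℝ] ℝ :=
  AlternatingMap.ofSubsingleton ℝ V ℝ 0 α

/-- Cast a `k`-form along an equality of degrees. -/
def castForm {V : Type*} [AddCommGroup V] [Module ℝ V] {k l : ℕ} (h : k = l)
    (θ : V [⋀^Fin k]→ₗ[ℝ] ℝ) : V [⋀^Fin l]→ₗ[ℝ] ℝ :=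
  AlternatingMap.domDomCongr (finCongr h) θ

/-- The `n`-th wedge power of an alternating `2`-form. -/
noncomputable def wpow {V : Type*} [AddCommGroup V] [Module ℝ V]
    (Ω : V [⋀^Fin 2]→ₗ[ℝ] ℝ) : (n : ℕ) → V [⋀^Fin (2 * n)]→ₗ[ℝ] ℝ
  | 0 => castForm (by omega) (AlternatingMap.constOfIsEmpty ℝ V (Fin 0) (1 : ℝ))
  | n + 1 => castForm (by omega) (wedge Ω (wpow Ω n))

open Equiv

section perms
variable {l : ℕ}

/-- index equivalence -/
def EE (l : ℕ) : (Fin 2 ⊕ Fin l) ≃ Fin (l + 2) :=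
  finSumFinEquiv.trans (finCongr (by omega))

/-- canonical representative permutation -/
def pp (l : ℕ) (i : Fin (l + 2)) (j : Fin (l + 1)) : Equiv.Perm (Fin (l + 2)) :=
  (Fin.cycleRange i)⁻¹ * Equiv.Perm.decomposeFin.symm (0, (Fin.cycleRange j)⁻¹)

lemma pp_zero (i : Fin (l + 2)) (j : Fin (l + 1)) : pp l i j 0 = i := by
  simp [pp, Equiv.Perm.mul_apply, Equiv.Perm.inv_def]

lemma pp_one (i : Fin (l + 2)) (j : Fin (l + 1)) : pp l i j 1 = i.succAbove j := by
  have h1 : (1 : Fin (l + 2)) = Fin.succ 0 := by simp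
  rw [pp, Equiv.Perm.mul_apply, h1, Equiv.Perm.decomposeFin_symm_apply_succ]
  simp [Equiv.Perm.inv_def]

lemma pp_ss (i : Fin (l + 2)) (j : Fin (l + 1)) (k : Fin l) :
    pp l i j (Fin.succ (Fin.succ k)) = i.succAbove (j.succAbove k) := by
  rw [pp, Equiv.Perm.mul_apply, Equiv.Perm.decomposeFin_symm_apply_succ]
  simp [Equiv.Perm.inv_def]

lemma sign_pp (i : Fin (l + 2)) (j : Fin (l + 1)) :
    Equiv.Perm.sign (pp l i j) = (-1 : ℤˣ) ^ ((i : ℕ) + (j : ℕ)) := by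
  simp [pp, Fin.sign_cycleRange, pow_add]

lemma EE_inl0 : EE l (Sum.inl 0) = 0 := by
  ext; simp [EE]

lemma EE_inl1 : EE l (Sum.inl 1) = 1 := by
  ext; simp [EE]

lemma EE_inr (k : Fin l) : EE l (Sum.inr k) = Fin.succ (Fin.succ k) := by
  ext; simp [EE]

lemma val_sA {n : ℕ} (i : Fin (n + 1)) (j : Fin n) :
    ((i.succAbove j) : ℕ) = if (j : ℕ) < (i : ℕ) then (j : ℕ) else (j : ℕ) + 1 := by
  rcases lt_or_ge ((j : ℕ)) ((i : ℕ)) with h | h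
  · rw [Fin.succAbove_of_castSucc_lt _ _ (by simpa [Fin.lt_iff_val_lt_val] using h)]
    simp [h]
  · have hc : ¬ ((j : ℕ) < (i : ℕ)) := by omega
    rw [Fin.succAbove_of_le_castSucc _ _ (by simpa [Fin.le_iff_val_le_val] using h), if_neg hc]
    simp

end perms


section wedgeApply
variable {V : Type*} [AddCommGroup V] [Module ℝ V] {l : ℕ}

/-- the representative permutation, as a permutation of `Fin 2 ⊕ Fin l` -/
def sgm (l : ℕ) (i : Fin (l + 2)) (j : Fin (l + 1)) : Equiv.Perm (Fin 2 ⊕ Fin l) :=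
  (EE l).symm.permCongr (pp l i j)

lemma sgm_apply (i : Fin (l + 2)) (j : Fin (l + 1)) (s : Fin 2 ⊕ Fin l) :
    sgm l i j s = (EE l).symm (pp l i j (EE l s)) := by
  simp [sgm, Equiv.permCongr_apply]

lemma sign_sgm (i : Fin (l + 2)) (j : Fin (l + 1)) :
    Equiv.Perm.sign (sgm l i j) = (-1 : ℤˣ) ^ ((i : ℕ) + (j : ℕ)) := by
  rw [sgm, Equiv.Perm.sign_permCongr, sign_pp]

lemma units_neg_one_pow_smul (k : ℕ) (r : ℝ) :
    ((-1 : ℤˣ) ^ k) • r = (-1 : ℝ) ^ k * r := by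
  rcases Nat.even_or_odd k with hk | hk
  · rw [hk.neg_one_pow, hk.neg_one_pow]; simp
  · rw [hk.neg_one_pow, hk.neg_one_pow]; simp

theorem wedge_apply (α : V [⋀^Fin 2]→ₗ[ℝ] ℝ) (β : V [⋀^Fin l]→ₗ[ℝ] ℝ) (v : Fin (l + 2) → V) :
    wedge α β (fun x => v (Fin.cast (by omega) x)) =
      ∑ p : Fin (l + 2) × Fin (l + 1),
        if (p.1 : ℕ) ≤ (p.2 : ℕ) then
          (-1 : ℝ) ^ ((p.1 : ℕ) + (p.2 : ℕ)) *
            (α ![v p.1, v (p.1.succAbove p.2)] *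
              β (fun k => v (p.1.succAbove (p.2.succAbove k))))
        else 0 := by
  have hcast : ∀ x : Fin 2 ⊕ Fin l,
      (Fin.cast (by omega : 2 + l = l + 2) (finSumFinEquiv x)) = EE l x := fun x => rfl
  rw [wedge, AlternatingMap.domDomCongr_apply, LinearMap.compAlternatingMap_apply,
    AlternatingMap.domCoprod_apply, MultilinearMap.sum_apply, map_sum,
    ← Finset.sum_filter]
  refine (Finset.sum_bij (fun p _ => Quotient.mk'' (sgm l p.1 p.2)) ?_ ?_ ?_ ?_).symm
  · intro a ha; simp
  · -- injectivity
    rintro ⟨i₁, j₁⟩ h₁ ⟨i₂, j₂⟩ h₂ heq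
    rw [Finset.mem_filter] at h₁ h₂
    have hle1 : (i₁ : ℕ) ≤ (j₁ : ℕ) := h₁.2
    have hle2 : (i₂ : ℕ) ≤ (j₂ : ℕ) := h₂.2
    rw [Quotient.eq'', QuotientGroup.leftRel_apply] at heq
    obtain ⟨⟨sl, sr⟩, hmul⟩ := heq
    have hq : ∀ s, sgm l i₂ j₂ s = sgm l i₁ j₁ (Equiv.sumCongr sl sr s) := by
      intro s
      have h1 : ((sgm l i₁ j₁)⁻¹ * sgm l i₂ j₂) s = Equiv.sumCongr sl sr s := by
        rw [← hmul]; rfl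
      have h2 := congrArg (sgm l i₁ j₁) h1
      rwa [Equiv.Perm.mul_apply, Equiv.Perm.coe_inv, Equiv.apply_symm_apply] at h2
    have key : ∀ x : Fin 2,
        pp l i₂ j₂ (EE l (Sum.inl x)) = pp l i₁ j₁ (EE l (Sum.inl (sl x))) := by
      intro x
      have hx := hq (Sum.inl x)
      rw [sgm_apply, sgm_apply] at hx
      simpa using (EE l).symm.injective.eq_iff.mp hx
    have hsl : (sl 0 = 0 ∧ sl 1 = 1) ∨ (sl 0 = 1 ∧ sl 1 = 0) := by
      have hne : sl 0 ≠ sl 1 := fun h => by simpa using sl.injective h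
      have h0 : (sl 0 : ℕ) = 0 ∨ (sl 0 : ℕ) = 1 := by omega
      have h1 : (sl 1 : ℕ) = 0 ∨ (sl 1 : ℕ) = 1 := by omega
      rcases h0 with ha | ha <;> rcases h1 with hb | hb
      · exact absurd (Fin.ext (ha.trans hb.symm)) hne
      · exact Or.inl ⟨Fin.ext ha, Fin.ext hb⟩
      · exact Or.inr ⟨Fin.ext ha, Fin.ext hb⟩
      · exact absurd (Fin.ext (ha.trans hb.symm)) hne
    have k0 := key 0
    have k1 := key 1
    rcases hsl with ⟨ha, hb⟩ | ⟨ha, hb⟩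
    · rw [ha, EE_inl0, pp_zero, pp_zero] at k0
      rw [hb, EE_inl1, pp_one, pp_one] at k1
      rw [k0] at k1
      have hj : j₂ = j₁ := Fin.succAbove_right_injective k1
      rw [Prod.ext_iff]
      exact ⟨k0.symm, hj.symm⟩
    · rw [ha, EE_inl0, EE_inl1, pp_zero, pp_one] at k0
      rw [hb, EE_inl1, EE_inl0, pp_one, pp_zero] at k1
      exfalso
      have e1 : ((i₁.succAbove j₁ : Fin (l + 2)) : ℕ) = (j₁ : ℕ) + 1 := by
        rw [val_sA, if_neg (by omega)]
      have e2 : ((i₂.succAbove j₂ : Fin (l + 2)) : ℕ) = (j₂ : ℕ) + 1 := by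
        rw [val_sA, if_neg (by omega)]
      have c0 := congrArg Fin.val k0
      have c1 := congrArg Fin.val k1
      simp only [e1, e2] at c0 c1
      omega
  · -- surjectivity
    intro b _
    induction b using Quotient.inductionOn' with
    | h g =>
    set x := EE l (g (Sum.inl 0)) with hx
    set y := EE l (g (Sum.inl 1)) with hy
    have hxy : x ≠ y := by
      intro h
      have h' := g.injective ((EE l).injective (hx ▸ hy ▸ h))
      simp at h'
    rcases lt_or_gt_of_ne (fun h : (x : ℕ) = (y : ℕ) => hxy (Fin.ext h)) with hlt | hgt
    · obtain ⟨z, hz⟩ := Fin.exists_succAbove_eq hxy.symm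
      have hcond : (x : ℕ) ≤ (z : ℕ) := by
        by_contra hc
        have hv := val_sA x z
        rw [hz, if_pos (by omega)] at hv
        omega
      refine ⟨⟨x, z⟩, Finset.mem_filter.mpr ⟨Finset.mem_univ _, hcond⟩, ?_⟩
      apply Quotient.sound'
      rw [QuotientGroup.leftRel_apply]
      apply Equiv.Perm.mem_sumCongrHom_range_of_perm_mapsTo_inl
      rintro _ ⟨t, rfl⟩
      have ht : (t : ℕ) = 0 ∨ (t : ℕ) = 1 := by omega
      rcases ht with ht | ht
      · have ht' : t = 0 := Fin.ext ht
        subst ht'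
        have hg : g (Sum.inl 0) = sgm l x z (Sum.inl 0) := by
          rw [sgm_apply, EE_inl0, pp_zero]
          exact ((EE l).symm_apply_apply _).symm
        refine ⟨0, ?_⟩
        rw [Equiv.Perm.mul_apply, hg, Equiv.Perm.coe_inv, Equiv.symm_apply_apply]
      · have ht' : t = 1 := Fin.ext ht
        subst ht'
        have hg : g (Sum.inl 1) = sgm l x z (Sum.inl 1) := by
          rw [sgm_apply, EE_inl1, pp_one, hz]
          exact ((EE l).symm_apply_apply _).symm
        refine ⟨1, ?_⟩
        rw [Equiv.Perm.mul_apply, hg, Equiv.Perm.coe_inv, Equiv.symm_apply_apply]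
    · obtain ⟨z, hz⟩ := Fin.exists_succAbove_eq hxy
      have hcond : (y : ℕ) ≤ (z : ℕ) := by
        by_contra hc
        have hv := val_sA y z
        rw [hz, if_pos (by omega)] at hv
        omega
      refine ⟨⟨y, z⟩, Finset.mem_filter.mpr ⟨Finset.mem_univ _, hcond⟩, ?_⟩
      apply Quotient.sound'
      rw [QuotientGroup.leftRel_apply]
      apply Equiv.Perm.mem_sumCongrHom_range_of_perm_mapsTo_inl
      rintro _ ⟨t, rfl⟩
      have ht : (t : ℕ) = 0 ∨ (t : ℕ) = 1 := by omega
      rcases ht with ht | ht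
      · have ht' : t = 0 := Fin.ext ht
        subst ht'
        have hg : g (Sum.inl 0) = sgm l y z (Sum.inl 1) := by
          rw [sgm_apply, EE_inl1, pp_one, hz]
          exact ((EE l).symm_apply_apply _).symm
        refine ⟨1, ?_⟩
        rw [Equiv.Perm.mul_apply, hg, Equiv.Perm.coe_inv, Equiv.symm_apply_apply]
      · have ht' : t = 1 := Fin.ext ht
        subst ht'
        have hg : g (Sum.inl 1) = sgm l y z (Sum.inl 0) := by
          rw [sgm_apply, EE_inl0, pp_zero]
          exact ((EE l).symm_apply_apply _).symm
        refine ⟨0, ?_⟩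
        rw [Equiv.Perm.mul_apply, hg, Equiv.Perm.coe_inv, Equiv.symm_apply_apply]
  · -- values
    rintro ⟨i, j⟩ hp
    rw [Finset.mem_filter] at hp
    rw [AlternatingMap.domCoprod.summand_mk'', MultilinearMap.smul_apply,
      MultilinearMap.domDomCongr_apply, MultilinearMap.domCoprod_apply]
    simp only [Function.comp, AlternatingMap.coe_multilinearMap]
    have hw : ∀ s : Fin 2 ⊕ Fin l,
        v (Fin.cast (by omega : 2 + l = l + 2) (finSumFinEquiv (sgm l i j s))) =
          v (pp l i j (EE l s)) := by
      intro s
      rw [sgm_apply]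
      have hee : Fin.cast (by omega : 2 + l = l + 2)
          (finSumFinEquiv ((EE l).symm (pp l i j (EE l s)))) =
          EE l ((EE l).symm (pp l i j (EE l s))) := rfl
      rw [hee, Equiv.apply_symm_apply]
    have h1 : (fun x : Fin 2 =>
        v (Fin.cast (by omega : 2 + l = l + 2) (finSumFinEquiv (sgm l i j (Sum.inl x))))) =
        ![v i, v (i.succAbove j)] := by
      funext x
      have hx : (x : ℕ) = 0 ∨ (x : ℕ) = 1 := by omega
      rcases hx with hx | hx
      · have : x = 0 := Fin.ext hx
        subst this
        rw [hw, EE_inl0, pp_zero]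
        simp
      · have : x = 1 := Fin.ext hx
        subst this
        rw [hw, EE_inl1, pp_one]
        simp
    have h2 : (fun k : Fin l =>
        v (Fin.cast (by omega : 2 + l = l + 2) (finSumFinEquiv (sgm l i j (Sum.inr k))))) =
        fun k => v (i.succAbove (j.succAbove k)) := by
      funext k
      rw [hw, EE_inr, pp_ss]
    rw [h1, h2, sign_sgm, Units.smul_def, map_zsmul]
    simp only [LinearEquiv.coe_coe, TensorProduct.lid_tmul, smul_eq_mul, zsmul_eq_mul]
    push_cast [Units.val_pow_eq_pow_val]
    ring

end wedgeApply


section wpowLemmas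
variable {V : Type*} [AddCommGroup V] [Module ℝ V]

lemma wpow_zero_apply (Ω : V [⋀^Fin 2]→ₗ[ℝ] ℝ) (u : Fin (2 * 0) → V) :
    wpow Ω 0 u = 1 := by
  simp [wpow, castForm]

lemma wpow_succ_apply (Ω : V [⋀^Fin 2]→ₗ[ℝ] ℝ) (m : ℕ) (u : Fin (2 * m + 2) → V) :
    wpow Ω (m + 1) u =
      ∑ p : Fin (2 * m + 2) × Fin (2 * m + 1),
        if (p.1 : ℕ) ≤ (p.2 : ℕ) then
          (-1 : ℝ) ^ ((p.1 : ℕ) + (p.2 : ℕ)) *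
            (Ω ![u p.1, u (p.1.succAbove p.2)] *
              wpow Ω m (fun k => u (p.1.succAbove (p.2.succAbove k))))
        else 0 := by
  have h := wedge_apply (l := 2 * m) Ω (wpow Ω m) u
  rw [← h]
  rfl

lemma cons2_apply {n : ℕ} (X Y : V) (w : Fin n → V) (z : Fin (n + 2)) :
    (Fin.cons X (Fin.cons Y w) : Fin (n + 2) → V) z =
      if h0 : (z : ℕ) = 0 then X
      else if h1 : (z : ℕ) = 1 then Y
      else w ⟨(z : ℕ) - 2, by omega⟩ := by
  rcases z with ⟨zv, hz⟩
  match zv with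
  | 0 => simp [show (⟨0, hz⟩ : Fin (n + 2)) = 0 from rfl]
  | 1 =>
    rw [show (⟨1, hz⟩ : Fin (n + 2)) = Fin.succ 0 from rfl, Fin.cons_succ, Fin.cons_zero]
    simp
  | (zv2 + 2) =>
    rw [show (⟨zv2 + 2, hz⟩ : Fin (n + 2)) = Fin.succ (Fin.succ ⟨zv2, by omega⟩) from rfl,
      Fin.cons_succ, Fin.cons_succ]
    simp

end wpowLemmas

section Rlemma
variable {V : Type*} [AddCommGroup V] [Module ℝ V]

lemma wpow_cons (Ω : V [⋀^Fin 2]→ₗ[ℝ] ℝ) (m : ℕ) :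
    ∀ (X Y : V) (w : Fin (2 * m) → V),
      (∀ j, Ω ![X, w j] = 0) → (∀ j, Ω ![Y, w j] = 0) →
      wpow Ω (m + 1) (Fin.cons X (Fin.cons Y w)) =
        ((m : ℝ) + 1) * (Ω ![X, Y] * wpow Ω m w) := by
  induction m with
  | zero =>
    intro X Y w hX hY
    rw [wpow_succ_apply]
    rw [Fintype.sum_prod_type]
    rw [Fin.sum_univ_two]
    rw [Fin.sum_univ_one, Fin.sum_univ_one]
    have ha : ((0 : Fin 2) : ℕ) ≤ ((0 : Fin 1) : ℕ) := le_refl _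
    have hb : ¬ (((1 : Fin 2) : ℕ) ≤ ((0 : Fin 1) : ℕ)) := by simp
    rw [if_pos ha, if_neg hb]
    have hsA : (0 : Fin 2).succAbove (0 : Fin 1) = 1 := by decide
    have h0 : (Fin.cons X (Fin.cons Y w) : Fin 2 → V) 0 = X := Fin.cons_zero _ _
    have h1 : (Fin.cons X (Fin.cons Y w) : Fin 2 → V) 1 = Y := by
      rw [show (1 : Fin 2) = Fin.succ 0 from rfl, Fin.cons_succ, Fin.cons_zero]
    rw [hsA, h0, h1, wpow_zero_apply, wpow_zero_apply]
    norm_num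
  | succ m ih =>
    intro X Y w hX hY
    set u : Fin (2 * (m + 1) + 2) → V := Fin.cons X (Fin.cons Y w) with hu
    have hu0 : u 0 = X := Fin.cons_zero _ _
    have hu1 : u 1 = Y := by
      rw [hu, show (1 : Fin (2 * (m + 1) + 2)) = Fin.succ 0 from rfl, Fin.cons_succ,
        Fin.cons_zero]
    have hu2 : ∀ (z : Fin (2 * (m + 1) + 2)) (hz : 2 ≤ (z : ℕ)),
        u z = w ⟨(z : ℕ) - 2, by omega⟩ := by
      intro z hz
      rw [hu, cons2_apply, dif_neg (by omega), dif_neg (by omega)]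
    rw [wpow_succ_apply]
    rw [← Finset.sum_filter_add_sum_filter_not Finset.univ
      (fun p : Fin (2 * (m + 1) + 2) × Fin (2 * (m + 1) + 1) =>
        2 ≤ (p.1 : ℕ) ∧ 2 ≤ (p.2 : ℕ))]
    have hsecond :
        (∑ p ∈ Finset.univ.filter
            (fun p : Fin (2 * (m + 1) + 2) × Fin (2 * (m + 1) + 1) =>
              ¬(2 ≤ (p.1 : ℕ) ∧ 2 ≤ (p.2 : ℕ))),
          if (p.1 : ℕ) ≤ (p.2 : ℕ) then
            (-1 : ℝ) ^ ((p.1 : ℕ) + (p.2 : ℕ)) *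
              (Ω ![u p.1, u (p.1.succAbove p.2)] *
                wpow Ω (m + 1) (fun k => u (p.1.succAbove (p.2.succAbove k))))
          else 0) = Ω ![X, Y] * wpow Ω (m + 1) w := by
      rw [Finset.sum_eq_single_of_mem
        ((0 : Fin (2 * (m + 1) + 2)), (0 : Fin (2 * (m + 1) + 1)))]
      · dsimp only
        rw [if_pos (by simp)]
        have e1 : u ((0 : Fin (2 * (m + 1) + 2)).succAbove 0) = Y := by
          rw [Fin.zero_succAbove, hu, Fin.cons_succ, Fin.cons_zero]
        have e2 : (fun k => u ((0 : Fin (2 * (m + 1) + 2)).succAbove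
            ((0 : Fin (2 * (m + 1) + 1)).succAbove k))) = w := by
          funext k
          rw [Fin.zero_succAbove, Fin.zero_succAbove, hu, Fin.cons_succ, Fin.cons_succ]
        rw [e1, e2, hu0]
        norm_num
      · simp
      · rintro ⟨b1, b2⟩ hb hbne
        dsimp only
        rw [Finset.mem_filter] at hb
        have hb' : ¬(2 ≤ (b1 : ℕ) ∧ 2 ≤ (b2 : ℕ)) := hb.2
        by_cases hcond : (b1 : ℕ) ≤ (b2 : ℕ)
        · rw [if_pos hcond]
          have hb1 : (b1 : ℕ) = 0 ∨ (b1 : ℕ) = 1 := by omega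
          have hb2pos : 1 ≤ (b2 : ℕ) := by
            rcases hb1 with h | h
            · by_contra hc
              apply hbne
              have hb10 : b1 = 0 := Fin.ext (by simpa using h)
              have hb20 : b2 = 0 := Fin.ext (by simp at hc ⊢; omega)
              rw [hb10, hb20]
            · omega
          have hsab : ((b1.succAbove b2 : Fin (2 * (m + 1) + 2)) : ℕ) = (b2 : ℕ) + 1 := by
            rw [val_sA, if_neg (by omega)]
          have harg2 : u (b1.succAbove b2) = w ⟨(b2 : ℕ) - 1, by omega⟩ := by
            rw [hu2 _ (by rw [hsab]; omega)]
            exact congrArg w (Fin.ext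
              (show ((b1.succAbove b2 : Fin (2 * (m + 1) + 2)) : ℕ) - 2 = (b2 : ℕ) - 1 by
                rw [hsab]; omega))
          have hzero : Ω ![u b1, u (b1.succAbove b2)] = 0 := by
            rcases hb1 with h | h
            · have harg1 : u b1 = X := by
                rw [show b1 = 0 from Fin.ext (by simpa using h), hu0]
              rw [harg1, harg2]
              exact hX _
            · have harg1 : u b1 = Y := by
                rw [show b1 = 1 from Fin.ext (by simpa using h), hu1]
              rw [harg1, harg2]
              exact hY _
          rw [hzero]
          ring
        · rw [if_neg hcond]
    rw [hsecond]
    have hfirst :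
        (∑ p ∈ Finset.univ.filter
            (fun p : Fin (2 * (m + 1) + 2) × Fin (2 * (m + 1) + 1) =>
              2 ≤ (p.1 : ℕ) ∧ 2 ≤ (p.2 : ℕ)),
          if (p.1 : ℕ) ≤ (p.2 : ℕ) then
            (-1 : ℝ) ^ ((p.1 : ℕ) + (p.2 : ℕ)) *
              (Ω ![u p.1, u (p.1.succAbove p.2)] *
                wpow Ω (m + 1) (fun k => u (p.1.succAbove (p.2.succAbove k))))
          else 0) =
        ((m : ℝ) + 1) * (Ω ![X, Y] * wpow Ω (m + 1) w) := by
      have hbij :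
          (∑ p ∈ Finset.univ.filter
              (fun p : Fin (2 * (m + 1) + 2) × Fin (2 * (m + 1) + 1) =>
                2 ≤ (p.1 : ℕ) ∧ 2 ≤ (p.2 : ℕ)),
            if (p.1 : ℕ) ≤ (p.2 : ℕ) then
              (-1 : ℝ) ^ ((p.1 : ℕ) + (p.2 : ℕ)) *
                (Ω ![u p.1, u (p.1.succAbove p.2)] *
                  wpow Ω (m + 1) (fun k => u (p.1.succAbove (p.2.succAbove k))))
            else 0) =
          ∑ q : Fin (2 * m + 2) × Fin (2 * m + 1),
            ((m : ℝ) + 1) * (Ω ![X, Y] *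
              (if (q.1 : ℕ) ≤ (q.2 : ℕ) then
                (-1 : ℝ) ^ ((q.1 : ℕ) + (q.2 : ℕ)) *
                  (Ω ![w q.1, w (q.1.succAbove q.2)] *
                    wpow Ω m (fun k => w (q.1.succAbove (q.2.succAbove k))))
              else 0)) := by
        refine Finset.sum_bij
          (fun p _ => ((⟨(p.1 : ℕ) - 2, by omega⟩ : Fin (2 * m + 2)),
            (⟨(p.2 : ℕ) - 2, by omega⟩ : Fin (2 * m + 1)))) ?_ ?_ ?_ ?_
        · intro a ha; exact Finset.mem_univ _
        · rintro ⟨a1, a2⟩ ha ⟨b1, b2⟩ hb heq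
          dsimp only at heq
          rw [Finset.mem_filter] at ha hb
          have ha2 : 2 ≤ (a1 : ℕ) ∧ 2 ≤ (a2 : ℕ) := ha.2
          have hb2 : 2 ≤ (b1 : ℕ) ∧ 2 ≤ (b2 : ℕ) := hb.2
          have h1 := congrArg (fun q : Fin (2 * m + 2) × Fin (2 * m + 1) => (q.1 : ℕ)) heq
          have h2 := congrArg (fun q : Fin (2 * m + 2) × Fin (2 * m + 1) => (q.2 : ℕ)) heq
          simp only at h1 h2
          have e1 : a1 = b1 := Fin.ext (by omega)
          have e2 : a2 = b2 := Fin.ext (by omega)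
          rw [e1, e2]
        · rintro ⟨q1, q2⟩ _
          refine ⟨(⟨(q1 : ℕ) + 2, by omega⟩, ⟨(q2 : ℕ) + 2, by omega⟩), ?_, ?_⟩
          · rw [Finset.mem_filter]
            refine ⟨Finset.mem_univ _, by constructor <;> simp⟩
          · dsimp only
            exact Prod.ext (Fin.ext (by simp)) (Fin.ext (by simp))
        · rintro ⟨p1, p2⟩ hp
          dsimp only
          rw [Finset.mem_filter] at hp
          have hp1 : 2 ≤ (p1 : ℕ) := hp.2.1
          have hp2 : 2 ≤ (p2 : ℕ) := hp.2.2
          set q1 : Fin (2 * m + 2) := ⟨(p1 : ℕ) - 2, by omega⟩ with hq1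
          set q2 : Fin (2 * m + 1) := ⟨(p2 : ℕ) - 2, by omega⟩ with hq2
          have hq1v : (q1 : ℕ) = (p1 : ℕ) - 2 := rfl
          have hq2v : (q2 : ℕ) = (p2 : ℕ) - 2 := rfl
          by_cases hcond : (p1 : ℕ) ≤ (p2 : ℕ)
          · rw [if_pos hcond, if_pos (show (q1 : ℕ) ≤ (q2 : ℕ) by omega)]
            have hsab : ((p1.succAbove p2 : Fin (2 * (m + 1) + 2)) : ℕ) = (p2 : ℕ) + 1 := by
              rw [val_sA, if_neg (by omega)]
            have hqsab : ((q1.succAbove q2 : Fin (2 * m + 2)) : ℕ) = (p2 : ℕ) - 1 := by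
              rw [val_sA, if_neg (by omega)]
              omega
            have hmatA : u p1 = w q1 := by
              rw [hu2 _ (by omega)]
            have hmatB : u (p1.succAbove p2) = w (q1.succAbove q2) := by
              rw [hu2 _ (by rw [hsab]; omega)]
              exact congrArg w (Fin.ext
                (show ((p1.succAbove p2 : Fin (2 * (m + 1) + 2)) : ℕ) - 2
                    = ((q1.succAbove q2 : Fin (2 * m + 2)) : ℕ) by
                  rw [hsab, hqsab]; omega))
            have htail : (fun k => u (p1.succAbove (p2.succAbove k))) =
                Fin.cons X (Fin.cons Y (fun k => w (q1.succAbove (q2.succAbove k)))) := by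
              funext k
              have hvp2 : ((p2.succAbove k : Fin (2 * (m + 1) + 1)) : ℕ) =
                  if (k : ℕ) < (p2 : ℕ) then (k : ℕ) else (k : ℕ) + 1 := val_sA _ _
              have hvp1 : ((p1.succAbove (p2.succAbove k) : Fin (2 * (m + 1) + 2)) : ℕ) =
                  if ((p2.succAbove k : Fin (2 * (m + 1) + 1)) : ℕ) < (p1 : ℕ)
                  then ((p2.succAbove k : Fin (2 * (m + 1) + 1)) : ℕ)
                  else ((p2.succAbove k : Fin (2 * (m + 1) + 1)) : ℕ) + 1 := val_sA _ _
              rw [cons2_apply]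
              have hk : (k : ℕ) = 0 ∨ (k : ℕ) = 1 ∨ 2 ≤ (k : ℕ) := by omega
              rcases hk with hk | hk | hk
              · rw [dif_pos hk]
                have hA : ((p2.succAbove k : Fin (2 * (m + 1) + 1)) : ℕ) = (k : ℕ) := by
                  rw [hvp2, if_pos (by omega)]
                have hval : ((p1.succAbove (p2.succAbove k) : Fin (2 * (m + 1) + 2)) : ℕ)
                    = 0 := by
                  rw [hvp1, hA, if_pos (by omega)]
                  omega
                rw [show p1.succAbove (p2.succAbove k) = 0 from
                  Fin.ext (by rw [hval]; simp), hu0]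
              · rw [dif_neg (by omega), dif_pos hk]
                have hA : ((p2.succAbove k : Fin (2 * (m + 1) + 1)) : ℕ) = (k : ℕ) := by
                  rw [hvp2, if_pos (by omega)]
                have hval : ((p1.succAbove (p2.succAbove k) : Fin (2 * (m + 1) + 2)) : ℕ)
                    = 1 := by
                  rw [hvp1, hA, if_pos (by omega)]
                  omega
                rw [show p1.succAbove (p2.succAbove k) = 1 from
                  Fin.ext (by rw [hval]; simp), hu1]
              · rw [dif_neg (by omega), dif_neg (by omega)]
                have hval2 : 2 ≤ ((p1.succAbove (p2.succAbove k)
                    : Fin (2 * (m + 1) + 2)) : ℕ) := by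
                  rw [hvp1, hvp2]
                  split_ifs <;> omega
                have hvq2 : ((q2.succAbove (⟨(k : ℕ) - 2, by omega⟩ : Fin (2 * m))
                    : Fin (2 * m + 1)) : ℕ) =
                    if (k : ℕ) - 2 < (q2 : ℕ) then (k : ℕ) - 2 else (k : ℕ) - 2 + 1 := by
                  rw [val_sA]
                have hvq1 : ((q1.succAbove (q2.succAbove ⟨(k : ℕ) - 2, by omega⟩)
                    : Fin (2 * m + 2)) : ℕ) =
                    if ((q2.succAbove (⟨(k : ℕ) - 2, by omega⟩ : Fin (2 * m))
                      : Fin (2 * m + 1)) : ℕ) < (q1 : ℕ)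
                    then ((q2.succAbove (⟨(k : ℕ) - 2, by omega⟩ : Fin (2 * m))
                      : Fin (2 * m + 1)) : ℕ)
                    else ((q2.succAbove (⟨(k : ℕ) - 2, by omega⟩ : Fin (2 * m))
                      : Fin (2 * m + 1)) : ℕ) + 1 := val_sA _ _
                have hidx : ((p1.succAbove (p2.succAbove k) : Fin (2 * (m + 1) + 2)) : ℕ) - 2
                    = ((q1.succAbove (q2.succAbove ⟨(k : ℕ) - 2, by omega⟩)
                      : Fin (2 * m + 2)) : ℕ) := by
                  simp only [hvp1, hvp2, hvq1, hvq2]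
                  split_ifs <;> omega
                exact (hu2 _ hval2).trans (congrArg w (Fin.ext hidx))
            rw [hmatA, hmatB, htail]
            rw [ih X Y _ (fun k => hX _) (fun k => hY _)]
            have hsign : (-1 : ℝ) ^ ((p1 : ℕ) + (p2 : ℕ)) =
                (-1 : ℝ) ^ ((q1 : ℕ) + (q2 : ℕ)) := by
              have he : (p1 : ℕ) + (p2 : ℕ) = ((q1 : ℕ) + (q2 : ℕ)) + 4 := by omega
              rw [he, pow_add]
              norm_num
            rw [hsign]
            ring
          · rw [if_neg hcond, if_neg (show ¬((q1 : ℕ) ≤ (q2 : ℕ)) by omega)]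
            ring
      rw [hbij]
      rw [← Finset.mul_sum]
      rw [show (∑ q : Fin (2 * m + 2) × Fin (2 * m + 1),
          Ω ![X, Y] * (if (q.1 : ℕ) ≤ (q.2 : ℕ) then
            (-1 : ℝ) ^ ((q.1 : ℕ) + (q.2 : ℕ)) *
              (Ω ![w q.1, w (q.1.succAbove q.2)] *
                wpow Ω m (fun k => w (q.1.succAbove (q.2.succAbove k))))
          else 0)) = Ω ![X, Y] * ∑ q : Fin (2 * m + 2) × Fin (2 * m + 1),
            (if (q.1 : ℕ) ≤ (q.2 : ℕ) then
            (-1 : ℝ) ^ ((q.1 : ℕ) + (q.2 : ℕ)) *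
              (Ω ![w q.1, w (q.1.succAbove q.2)] *
                wpow Ω m (fun k => w (q.1.succAbove (q.2.succAbove k))))
          else 0) from (Finset.mul_sum _ _ _).symm]
      rw [← wpow_succ_apply]
    rw [hfirst]
    push_cast
    ring

end Rlemma

section MainSec
variable {V : Type*} [AddCommGroup V] [Module ℝ V]

lemma upd0 (X Y Z : V) : Function.update ![X, Y] 0 Z = ![Z, Y] := by
  funext t
  fin_cases t <;> simp [Function.update]

lemma upd1 (X Y Z : V) : Function.update ![X, Y] 1 Z = ![X, Z] := by
  funext t
  fin_cases t <;> simp [Function.update]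

/-- The bilinear form attached to an alternating 2-form. -/
noncomputable def bform (Ω : V [⋀^Fin 2]→ₗ[ℝ] ℝ) : V →ₗ[ℝ] V →ₗ[ℝ] ℝ :=
  LinearMap.mk₂ ℝ (fun x y => Ω ![x, y])
    (fun x x' y => by
      rw [← upd0 x y (x + x'), AlternatingMap.map_update_add, upd0, upd0])
    (fun c x y => by
      rw [← upd0 x y (c • x), AlternatingMap.map_update_smul, upd0, smul_eq_mul])
    (fun x y y' => by
      rw [← upd1 x y (y + y'), AlternatingMap.map_update_add, upd1, upd1])
    (fun c x y => by
      rw [← upd1 x y (c • y), AlternatingMap.map_update_smul, upd1, smul_eq_mul])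

lemma bform_apply (Ω : V [⋀^Fin 2]→ₗ[ℝ] ℝ) (x y : V) : bform Ω x y = Ω ![x, y] := rfl

lemma bform_self (Ω : V [⋀^Fin 2]→ₗ[ℝ] ℝ) (x : V) : bform Ω x x = 0 := by
  rw [bform_apply]
  exact Ω.map_eq_zero_of_eq ![x, x] (i := 0) (j := 1) rfl (by decide)

lemma bform_skew (Ω : V [⋀^Fin 2]→ₗ[ℝ] ℝ) (x y : V) : bform Ω x y = - bform Ω y x := by
  have h := bform_self Ω (x + y)
  have hx := bform_self Ω x
  have hy := bform_self Ω y
  simp only [map_add, LinearMap.add_apply] at h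
  linarith

lemma wpow_restrict (Ω : V [⋀^Fin 2]→ₗ[ℝ] ℝ) (W : Submodule ℝ V) :
    ∀ (m : ℕ) (ws : Fin (2 * m) → W),
      wpow (Ω.compLinearMap W.subtype) m ws = wpow Ω m (fun k => (ws k : V))
  | 0, ws => by rw [wpow_zero_apply, wpow_zero_apply]
  | (m + 1), ws => by
    rw [wpow_succ_apply, wpow_succ_apply]
    apply Finset.sum_congr rfl
    intro p _
    by_cases hc : (p.1 : ℕ) ≤ (p.2 : ℕ)
    · rw [if_pos hc, if_pos hc]
      have e1 : (Ω.compLinearMap W.subtype) ![ws p.1, ws (p.1.succAbove p.2)] =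
          Ω ![(ws p.1 : V), (ws (p.1.succAbove p.2) : V)] := by
        rw [AlternatingMap.compLinearMap_apply]
        congr 1
        funext t
        fin_cases t <;> simp
      rw [e1, wpow_restrict Ω W m (fun k => ws (p.1.succAbove (p.2.succAbove k)))]
    · rw [if_neg hc, if_neg hc]

theorem wpow_nondeg_ne_zero :
    ∀ (n : ℕ) {V : Type*} [AddCommGroup V] [Module ℝ V] [FiniteDimensional ℝ V]
      (Ω : V [⋀^Fin 2]→ₗ[ℝ] ℝ),
      2 * n ≤ Module.finrank ℝ V →
      (∀ X : V, X ≠ 0 → ∃ Y : V, Ω ![X, Y] ≠ 0) → wpow Ω n ≠ 0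
  | 0, V, _, _, _, Ω, hdim, hnd => by
    intro h0
    have := DFunLike.congr_fun h0 (fun _ => (0 : V))
    rw [wpow_zero_apply] at this
    simp at this
  | (n + 1), V, _, _, _, Ω, hdim, hnd => by
    intro hzero
    have hpos : 0 < Module.finrank ℝ V := by omega
    have : Nontrivial V := Module.nontrivial_of_finrank_pos hpos
    obtain ⟨X, hX0⟩ : ∃ X : V, X ≠ 0 := exists_ne 0
    obtain ⟨Y0, hY0⟩ := hnd X hX0
    set B := bform Ω with hBdef
    set Y : V := (Ω ![X, Y0])⁻¹ • Y0 with hYdef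
    have hXY : B X Y = 1 := by
      rw [hYdef, map_smul, smul_eq_mul, bform_apply]
      exact inv_mul_cancel₀ hY0
    have hXX : B X X = 0 := bform_self Ω X
    have hYY : B Y Y = 0 := bform_self Ω Y
    have hYX : B Y X = -1 := by rw [bform_skew, hXY]
    set W := LinearMap.ker (B X) ⊓ LinearMap.ker (B Y) with hWdef
    have hrank : 2 * n ≤ Module.finrank ℝ W := by
      have h1 := LinearMap.finrank_range_add_finrank_ker (B X)
      have h2 := LinearMap.finrank_range_add_finrank_ker (B Y)
      have hr1 : Module.finrank ℝ (LinearMap.range (B X)) ≤ 1 := by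
        simpa using Submodule.finrank_le (LinearMap.range (B X))
      have hr2 : Module.finrank ℝ (LinearMap.range (B Y)) ≤ 1 := by
        simpa using Submodule.finrank_le (LinearMap.range (B Y))
      have h3 := Submodule.finrank_sup_add_finrank_inf_eq
        (LinearMap.ker (B X)) (LinearMap.ker (B Y))
      have h4 : Module.finrank ℝ
          ((LinearMap.ker (B X)) ⊔ (LinearMap.ker (B Y)) : Submodule ℝ V) ≤
          Module.finrank ℝ V := Submodule.finrank_le _
      rw [hWdef]
      omega
    set ΩW := Ω.compLinearMap W.subtype with hΩWdef
    have hndW : ∀ Z : W, Z ≠ 0 → ∃ T : W, ΩW ![Z, T] ≠ 0 := by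
      intro Z hZ
      obtain ⟨v, hv⟩ := hnd (Z : V) (fun h => hZ (Subtype.ext h))
      have hZmem : (Z : V) ∈ LinearMap.ker (B X) ⊓ LinearMap.ker (B Y) := Z.2
      rw [Submodule.mem_inf] at hZmem
      have hXZ : B X (Z : V) = 0 := LinearMap.mem_ker.mp hZmem.1
      have hYZ : B Y (Z : V) = 0 := LinearMap.mem_ker.mp hZmem.2
      have hZX : B (Z : V) X = 0 := by rw [bform_skew, hXZ]; ring
      have hZY : B (Z : V) Y = 0 := by rw [bform_skew, hYZ]; ring
      set v' : V := v - (B X v) • Y + (B Y v) • X with hv'def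
      have hm1 : B X v' = 0 := by
        rw [hv'def]
        simp only [map_add, map_sub, map_smul, smul_eq_mul, hXY, hXX]
        ring
      have hm2 : B Y v' = 0 := by
        rw [hv'def]
        simp only [map_add, map_sub, map_smul, smul_eq_mul, hYY, hYX]
        ring
      set T : W := ⟨v', Submodule.mem_inf.mpr ⟨LinearMap.mem_ker.mpr hm1,
        LinearMap.mem_ker.mpr hm2⟩⟩ with hTdef
      refine ⟨T, ?_⟩
      have he : ΩW ![Z, T] = B (Z : V) v' := by
        rw [hΩWdef, AlternatingMap.compLinearMap_apply, bform_apply]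
        congr 1
        funext t
        fin_cases t <;> simp
        rfl
      rw [he, hv'def]
      simp only [map_add, map_sub, map_smul, smul_eq_mul, hZX, hZY]
      have hBv : B (Z : V) v = Ω ![(Z : V), v] := bform_apply Ω _ _
      rw [show B (Z:V) v - B X v * 0 + B Y v * 0 = B (Z:V) v by ring, hBv]
      exact hv
    have IH := wpow_nondeg_ne_zero n ΩW hrank hndW
    obtain ⟨ws, hws⟩ := DFunLike.ne_iff.mp IH
    rw [AlternatingMap.zero_apply] at hws
    have hXj : ∀ j, Ω ![X, (ws j : V)] = 0 := by
      intro j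
      have hm : (ws j : V) ∈ LinearMap.ker (B X) ⊓ LinearMap.ker (B Y) := (ws j).2
      rw [Submodule.mem_inf] at hm
      rw [← bform_apply]
      exact LinearMap.mem_ker.mp hm.1
    have hYj : ∀ j, Ω ![Y, (ws j : V)] = 0 := by
      intro j
      have hm : (ws j : V) ∈ LinearMap.ker (B X) ⊓ LinearMap.ker (B Y) := (ws j).2
      rw [Submodule.mem_inf] at hm
      rw [← bform_apply]
      exact LinearMap.mem_ker.mp hm.2
    have hval := wpow_cons Ω n X Y (fun k => (ws k : V)) hXj hYj
    have h0 : wpow Ω (n + 1) (Fin.cons X (Fin.cons Y (fun k => (ws k : V)))) = 0 := by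
      rw [hzero]
      simp
    replace h0 := hval.symm.trans h0
    rcases mul_eq_zero.mp h0 with h | h
    · have : (0 : ℝ) ≤ (n : ℝ) := Nat.cast_nonneg n
      linarith
    · rcases mul_eq_zero.mp h with h' | h'
      · rw [← bform_apply, hXY] at h'
        exact one_ne_zero h'
      · exact hws ((wpow_restrict Ω W n ws).trans h')

end MainSec

/-- If `V` has dimension `2n`, `n ≥ 1`, and `Ω` is a nondegenerate
alternating 2-form on `V`, then the top-degree form `Ω^n` is nonzero. -/
theorem wpow_ne_zero {V : Type*} [AddCommGroup V] [Module ℝ V]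
    [FiniteDimensional ℝ V] (n : ℕ) (hn : 1 ≤ n)
    (hdim : Module.finrank ℝ V = 2 * n)
    (Ω : V [⋀^Fin 2]→ₗ[ℝ] ℝ)
    (hΩ : ∀ X : V, X ≠ 0 → ∃ Y : V, Ω ![X, Y] ≠ 0) :
    wpow Ω n ≠ 0 :=
  wpow_nondeg_ne_zero n Ω hdim.symm.le hΩ
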